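/- Two unit vectors v, w : Fin 4 → ℂ can be interchanged by a real special orthogonal matrix if and only if vᵀv = wᵀw: there exists p : Matrix (Fin 4) (Fin 4) ℝ with pᵀ * p = 1 and det p = 1 such that (p.map Complex.ofReal).mulVec v = w, if and only if v ⬝ᵥ v = w ⬝ᵥ w (dot product without conjugation). -/

import Mathlib

open Matrix Kronecker

noncomputable section

def σy : Matrix (Fin 2) (Fin 2) ℂ := !![0, -Complex.I; Complex.I, 0]

def eps (φ : Fin 2 × Fin 2 → ℂ) : ℂ := φ ⬝ᵥ ((σy ⊗ₖ σy).mulVec φ)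

def CNOT : Matrix (Fin 2 × Fin 2) (Fin 2 × Fin 2) ℂ :=
  Matrix.of fun p q => if p.1 = q.1 ∧ p.2 = q.1 + q.2 then 1 else 0

def e (i j : Fin 2) : Fin 2 × Fin 2 → ℂ := Pi.single (i, j) 1

def e₀ : Fin 2 × Fin 2 → ℂ := e 0 0

def Rz (θ : ℝ) : Matrix (Fin 2) (Fin 2) ℂ :=
  !![Complex.exp (Complex.I * θ / 2), 0; 0, Complex.exp (-Complex.I * θ / 2)]

def Rx (θ : ℝ) : Matrix (Fin 2) (Fin 2) ℂ :=
  !![(Real.cos (θ / 2) : ℂ), Complex.I * Real.sin (θ / 2);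
     Complex.I * Real.sin (θ / 2), (Real.cos (θ / 2) : ℂ)]

section SO4Aux

open RealInnerProductSpace

local notation "E4" => EuclideanSpace ℝ (Fin 4)

lemma det_reflection_singleton (u : E4) (hu : u ≠ 0) :
    LinearMap.det ((Submodule.reflection (Submodule.span ℝ {u})ᗮ).toLinearEquiv : E4 →ₗ[ℝ] E4) = -1 := by
  set f := Submodule.reflection (Submodule.span ℝ {u})ᗮ with hf
  have hnorm : ‖(‖u‖⁻¹ • u : E4)‖ = 1 := by
    rw [norm_smul, norm_inv, norm_norm, inv_mul_cancel₀ (norm_ne_zero_iff.mpr hu)]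
  have horth : Orthonormal ℝ (({0} : Set (Fin 4)).restrict (fun _ : Fin 4 => (‖u‖⁻¹ • u : E4))) := by
    constructor
    · intro i; exact hnorm
    · intro i j hij
      exact absurd (Subsingleton.elim i j) hij
  obtain ⟨b, hb⟩ := horth.exists_orthonormalBasis_extension_of_card_eq (by simp) 
  have hb0 : b 0 = ‖u‖⁻¹ • u := hb 0 rfl
  have hfb0 : f (b 0) = -(b 0) := by
    rw [hb0, LinearIsometryEquiv.map_smul, Submodule.reflection_orthogonalComplement_singleton_eq_neg, smul_neg]
  have hfbi : ∀ i : Fin 4, i ≠ 0 → f (b i) = b i := by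
    intro i hi
    apply Submodule.reflection_mem_subspace_eq_self
    rw [Submodule.mem_orthogonal_singleton_iff_inner_right]
    have := b.orthonormal.2 (show (0:Fin 4) ≠ i from fun h => hi h.symm)
    have hub : (u : E4) = ‖u‖ • b 0 := by
      rw [hb0, smul_smul, mul_inv_cancel₀ (norm_ne_zero_iff.mpr hu), one_smul]
    rw [hub, real_inner_smul_left, this, mul_zero]
  rw [← LinearMap.det_toMatrix b.toBasis]
  have : (LinearMap.toMatrix b.toBasis b.toBasis) (f.toLinearEquiv : E4 →ₗ[ℝ] E4)
      = Matrix.diagonal (fun i => if i = 0 then (-1 : ℝ) else 1) := by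
    ext i j
    rw [LinearMap.toMatrix_apply]
    rw [show (b.toBasis : Fin 4 → E4) = b from b.coe_toBasis]
    rcases eq_or_ne j 0 with rfl | hj
    · simp only [LinearEquiv.coe_coe, LinearIsometryEquiv.coe_toLinearEquiv]
      rw [hfb0, map_neg]
      simp [b.coe_toBasis_repr_apply, b.repr_self, Matrix.diagonal, EuclideanSpace.single_apply]
      by_cases h : i = 0 <;> simp [h]
    · simp only [LinearEquiv.coe_coe, LinearIsometryEquiv.coe_toLinearEquiv]
      rw [hfbi j hj]
      simp [b.coe_toBasis_repr_apply, b.repr_self, Matrix.diagonal, EuclideanSpace.single_apply, hj]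
      by_cases h : i = j
      · subst h; simp [hj]
      · simp [h, Ne.symm h]
  rw [this, Matrix.det_diagonal]
  simp [Fin.prod_univ_four]

lemma det_reflection_pm (u : E4) :
    LinearMap.det ((Submodule.reflection (Submodule.span ℝ {u})ᗮ).toLinearEquiv : E4 →ₗ[ℝ] E4) = 1 ∨
    LinearMap.det ((Submodule.reflection (Submodule.span ℝ {u})ᗮ).toLinearEquiv : E4 →ₗ[ℝ] E4) = -1 := by
  rcases eq_or_ne u 0 with rfl | hu
  · left
    have : Submodule.reflection (Submodule.span ℝ ({0} : Set E4))ᗮ = LinearIsometryEquiv.refl ℝ E4 := by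
      apply LinearIsometryEquiv.ext
      intro x
      apply Submodule.reflection_mem_subspace_eq_self
      simp [Submodule.mem_orthogonal]
    rw [this]
    simp [LinearIsometryEquiv.refl]
  · exact Or.inr (det_reflection_singleton u hu)

lemma exists_isometry_det_one (a b c d : E4)
    (h1 : ‖a‖ = ‖c‖) (h2 : ‖b‖ = ‖d‖) (h3 : ⟪a, b⟫ = ⟪c, d⟫) :
    ∃ f : E4 ≃ₗᵢ[ℝ] E4,
      LinearMap.det (f.toLinearEquiv : E4 →ₗ[ℝ] E4) = 1 ∧ f a = c ∧ f b = d := by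
  classical
  set f₁ := Submodule.reflection (Submodule.span ℝ {a - c})ᗮ with hf₁
  have hf₁a : f₁ a = c := Submodule.reflection_sub h1
  set b' := f₁ b with hb'
  have hb'n : ‖b'‖ = ‖d‖ := by rw [hb', f₁.norm_map]; exact h2
  have hinner : ⟪c, b'⟫ = ⟪c, d⟫ := by
    calc ⟪c, b'⟫ = ⟪f₁ a, f₁ b⟫ := by rw [hf₁a, hb']
    _ = ⟪a, b⟫ := f₁.inner_map_map a b
    _ = ⟪c, d⟫ := h3
  set f₂ := Submodule.reflection (Submodule.span ℝ {b' - d})ᗮ with hf₂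
  have hf₂b : f₂ b' = d := Submodule.reflection_sub hb'n
  have hf₂c : f₂ c = c := by
    apply Submodule.reflection_mem_subspace_eq_self
    rw [Submodule.mem_orthogonal_singleton_iff_inner_left, inner_sub_right, hinner, sub_self]
  set g := f₁.trans f₂ with hg
  have hga : g a = c := by rw [hg, LinearIsometryEquiv.trans_apply, hf₁a, hf₂c]
  have hgb : g b = d := by rw [hg, LinearIsometryEquiv.trans_apply, ← hb', hf₂b]
  have hdetg : LinearMap.det (g.toLinearEquiv : E4 →ₗ[ℝ] E4) = 1 ∨
      LinearMap.det (g.toLinearEquiv : E4 →ₗ[ℝ] E4) = -1 := by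
    have hcomp : (g.toLinearEquiv : E4 →ₗ[ℝ] E4)
        = (f₂.toLinearEquiv : E4 →ₗ[ℝ] E4) ∘ₗ (f₁.toLinearEquiv : E4 →ₗ[ℝ] E4) := by rfl
    rw [hcomp, LinearMap.det_comp]
    rcases det_reflection_pm (a - c) with h | h <;> rcases det_reflection_pm (b' - d) with h' | h' <;>
      rw [← hf₁] at h <;> rw [← hf₂] at h' <;> rw [h, h'] <;> norm_num
  rcases hdetg with h | h
  · exact ⟨g, h, hga, hgb⟩
  · -- compose with a reflection fixing c and d
    have hK : (Submodule.span ℝ ({c, d} : Set E4))ᗮ ≠ ⊥ := by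
      intro hbot
      have h1 := Submodule.finrank_add_finrank_orthogonal (Submodule.span ℝ ({c, d} : Set E4))
      rw [hbot] at h1
      simp [finrank_euclideanSpace_fin] at h1
      have h2 : Module.finrank ℝ (Submodule.span ℝ ({c, d} : Set E4)) ≤ 2 := by
        classical
        refine le_trans (finrank_span_le_card ({c, d} : Set E4)) ?_
        classical
        rw [Set.toFinset_insert, Set.toFinset_singleton]
        exact le_trans (Finset.card_insert_le _ _) (by simp)
      omega
    obtain ⟨u, huK, hu⟩ := Submodule.exists_mem_ne_zero_of_ne_bot hK
    set r := Submodule.reflection (Submodule.span ℝ {u})ᗮ with hr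
    have hrc : r c = c := by
      apply Submodule.reflection_mem_subspace_eq_self
      rw [Submodule.mem_orthogonal_singleton_iff_inner_left]
      exact huK c (Submodule.subset_span (by simp))
    have hrd : r d = d := by
      apply Submodule.reflection_mem_subspace_eq_self
      rw [Submodule.mem_orthogonal_singleton_iff_inner_left]
      exact huK d (Submodule.subset_span (by simp))
    refine ⟨g.trans r, ?_, by simp [LinearIsometryEquiv.trans_apply, hga, hrc],
      by simp [LinearIsometryEquiv.trans_apply, hgb, hrd]⟩
    have hcomp : ((g.trans r).toLinearEquiv : E4 →ₗ[ℝ] E4)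
        = (r.toLinearEquiv : E4 →ₗ[ℝ] E4) ∘ₗ (g.toLinearEquiv : E4 →ₗ[ℝ] E4) := by rfl
    rw [hcomp, LinearMap.det_comp, h, det_reflection_singleton u hu]
    norm_num

lemma exists_so_matrix (a b c d : E4)
    (h1 : ‖a‖ = ‖c‖) (h2 : ‖b‖ = ‖d‖) (h3 : ⟪a, b⟫ = ⟪c, d⟫) :
    ∃ p : Matrix (Fin 4) (Fin 4) ℝ, pᵀ * p = 1 ∧ p.det = 1 ∧
      p.mulVec a = c ∧ p.mulVec b = d := by
  classical
  obtain ⟨f, hdet, hfa, hfb⟩ := exists_isometry_det_one a b c d h1 h2 h3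
  set bE := EuclideanSpace.basisFun (Fin 4) ℝ with hbE
  set p := LinearMap.toMatrix bE.toBasis bE.toBasis (f.toLinearEquiv : E4 →ₗ[ℝ] E4) with hp
  have hmulVec : ∀ x : E4, p.mulVec x = f x := by
    intro x
    have := LinearMap.toMatrix_mulVec_repr bE.toBasis bE.toBasis
      (f.toLinearEquiv : E4 →ₗ[ℝ] E4) x
    have hrepr : ∀ y : E4, ⇑(bE.toBasis.repr y) = (y : Fin 4 → ℝ) := by
      intro y; funext i; rw [bE.coe_toBasis_repr_apply]; rfl
    rw [hrepr, hrepr] at this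
    exact this
  have hortho : pᵀ * p = 1 := by
    have hb' : p = bE.toBasis.toMatrix ⇑(bE.map f) := by
      ext i j
      rw [hp, LinearMap.toMatrix_apply, Module.Basis.toMatrix_apply]
      congr 2
    have := bE.toMatrix_orthonormalBasis_conjTranspose_mul_self (bE.map f)
    rw [← hb'] at this
    rw [← this]
    congr 1
  refine ⟨p, hortho, ?_, by rw [hmulVec, hfa], by rw [hmulVec, hfb]⟩
  rw [hp, LinearMap.det_toMatrix, hdet]

lemma inner_E4 (x y : E4) : ⟪x, y⟫ = ∑ i, x i * y i := by
  rw [PiLp.inner_apply]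
  simp only [RCLike.inner_apply, conj_trivial]
  exact Finset.sum_congr rfl fun i _ => mul_comm _ _

theorem so4_equiv_iff_bilinear_eq (v w : Fin 4 → ℂ)
    (hv : ∑ i, ‖v i‖ ^ 2 = 1) (hw : ∑ i, ‖w i‖ ^ 2 = 1) :
    (∃ p : Matrix (Fin 4) (Fin 4) ℝ, pᵀ * p = 1 ∧ p.det = 1 ∧
        (p.map Complex.ofReal).mulVec v = w) ↔ v ⬝ᵥ v = w ⬝ᵥ w := by
  constructor
  · rintro ⟨p, hpo, -, rfl⟩
    set A := p.map Complex.ofReal with hA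
    have hAT : Aᵀ * A = 1 := by
      have : Aᵀ = pᵀ.map Complex.ofReal := (Matrix.transpose_map).symm
      rw [this, hA]
      have hmap : ∀ M N : Matrix (Fin 4) (Fin 4) ℝ,
          (M * N).map (Complex.ofReal : ℝ → ℂ) = M.map Complex.ofReal * N.map Complex.ofReal := by
        intro M N
        ext i j
        simp [Matrix.map_apply, Matrix.mul_apply]
      rw [← hmap, hpo]
      ext i j
      simp [Matrix.map_apply, Matrix.one_apply]
      split <;> simp
    calc v ⬝ᵥ v = v ⬝ᵥ ((Aᵀ * A) *ᵥ v) := by rw [hAT, Matrix.one_mulVec]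
    _ = v ⬝ᵥ (Aᵀ *ᵥ (A *ᵥ v)) := by rw [Matrix.mulVec_mulVec]
    _ = (v ᵥ* Aᵀ) ⬝ᵥ (A *ᵥ v) := Matrix.dotProduct_mulVec v Aᵀ (A *ᵥ v)
    _ = (A *ᵥ v) ⬝ᵥ (A *ᵥ v) := by rw [Matrix.vecMul_transpose]
  · intro hvw
    set a : E4 := WithLp.toLp 2 fun i => (v i).re with ha
    set b : E4 := WithLp.toLp 2 fun i => (v i).im with hb
    set c : E4 := WithLp.toLp 2 fun i => (w i).re with hc
    set d : E4 := WithLp.toLp 2 fun i => (w i).im with hd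
    have hsv : ⟪a, a⟫ + ⟪b, b⟫ = 1 := by
      rw [inner_E4, inner_E4, ← Finset.sum_add_distrib, ← hv]
      congr 1; funext i
      rw [Complex.sq_norm, Complex.normSq_apply]
    have hsw : ⟪c, c⟫ + ⟪d, d⟫ = 1 := by
      rw [inner_E4, inner_E4, ← Finset.sum_add_distrib, ← hw]
      congr 1; funext i
      rw [Complex.sq_norm, Complex.normSq_apply]
    have hre : ⟪a, a⟫ - ⟪b, b⟫ = ⟪c, c⟫ - ⟪d, d⟫ := by
      have := congrArg Complex.re hvw
      rw [inner_E4, inner_E4, inner_E4, inner_E4]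
      simpa [dotProduct, Complex.re_sum, Complex.mul_re, inner_E4,
        Finset.sum_sub_distrib, ha, hb, hc, hd] using this
    have him : ⟪a, b⟫ = ⟪c, d⟫ := by
      have := congrArg Complex.im hvw
      simp only [dotProduct, Complex.im_sum, Complex.mul_im] at this
      rw [inner_E4, inner_E4]
      have h2 : (2:ℝ) ≠ 0 := by norm_num
      have : ∑ i, (a i * b i + a i * b i) = ∑ i, (c i * d i + c i * d i) := by
        convert this using 2 <;> ring_nf <;> rfl
      simp only [← two_mul, ← Finset.mul_sum] at this
      exact mul_left_cancel₀ h2 this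
    have h1 : ‖a‖ = ‖c‖ := by
      have e1 : ⟪a, a⟫ = ⟪c, c⟫ := by linarith
      rw [real_inner_self_eq_norm_sq, real_inner_self_eq_norm_sq] at e1
      rw [← Real.sqrt_sq (norm_nonneg a), ← Real.sqrt_sq (norm_nonneg c), e1]
    have h2 : ‖b‖ = ‖d‖ := by
      have e1 : ⟪b, b⟫ = ⟪d, d⟫ := by linarith
      rw [real_inner_self_eq_norm_sq, real_inner_self_eq_norm_sq] at e1
      rw [← Real.sqrt_sq (norm_nonneg b), ← Real.sqrt_sq (norm_nonneg d), e1]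
    obtain ⟨p, hpo, hpd, hpa, hpb⟩ := exists_so_matrix a b c d h1 h2 him
    refine ⟨p, hpo, hpd, ?_⟩
    funext j
    have hpa' : ∑ k, p j k * a k = c j := congrFun hpa j
    have hpb' : ∑ k, p j k * b k = d j := congrFun hpb j
    apply Complex.ext
    · show (∑ k, (p j k : ℂ) * v k).re = (w j).re
      rw [Complex.re_sum]
      simpa [Complex.mul_re] using hpa'
    · show (∑ k, (p j k : ℂ) * v k).im = (w j).im
      rw [Complex.im_sum]
      simpa [Complex.mul_im] using hpb'

end SO4Aux
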